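/- Let Λ be a full-rank lattice in ℝ^d (a discrete additive subgroup whose ℝ-span is ℝ^d), let x ∈ ℝ^d, and let S = {s ∈ Λ : ‖x − s‖ ≤ ‖x − l‖ for all l ∈ Λ} be the set of lattice points nearest to x. If the affine span of S has dimension k, then S has at most 2^k elements. -/

import Mathlib

set_option maxHeartbeats 1000000 in
set_option synthInstance.maxHeartbeats 100000 in
/-- Refined Voronoi case: if the affine span of the set `S` of lattice points of a
full-rank lattice `Λ ⊆ ℝ^d` nearest to `x` has dimension `k`, then `S` has at most
`2 ^ k` elements. -/
theorem nearest_lattice_points_card_le_affDim (d k : ℕ)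
    (Λ : AddSubgroup (EuclideanSpace ℝ (Fin d))) [DiscreteTopology Λ]
    (hfull : Submodule.span ℝ (Λ : Set (EuclideanSpace ℝ (Fin d))) = ⊤)
    (x : EuclideanSpace ℝ (Fin d))
    (hdim : Module.finrank ℝ
      (affineSpan ℝ {s : EuclideanSpace ℝ (Fin d) |
        s ∈ Λ ∧ ∀ l ∈ Λ, ‖x - s‖ ≤ ‖x - l‖}).direction = k) :
    {s : EuclideanSpace ℝ (Fin d) | s ∈ Λ ∧ ∀ l ∈ Λ, ‖x - s‖ ≤ ‖x - l‖}.Finite ∧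
      {s : EuclideanSpace ℝ (Fin d) | s ∈ Λ ∧ ∀ l ∈ Λ, ‖x - s‖ ≤ ‖x - l‖}.ncard ≤ 2 ^ k := by
  classical
  set S : Set (EuclideanSpace ℝ (Fin d)) :=
    {s | s ∈ Λ ∧ ∀ l ∈ Λ, ‖x - s‖ ≤ ‖x - l‖} with hSdef
  rcases S.eq_empty_or_nonempty with hSe | ⟨s₀, hs₀⟩
  · simp [hSe]
  set W : Submodule ℝ (EuclideanSpace ℝ (Fin d)) := (affineSpan ℝ S).direction with hW
  set M : Submodule ℤ (EuclideanSpace ℝ (Fin d)) :=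
    Λ.toIntSubmodule ⊓ W.restrictScalars ℤ with hM
  have hMΛ : ∀ v, v ∈ M → v ∈ Λ := fun v hv => hv.1
  have hMW : (M : Set (EuclideanSpace ℝ (Fin d))) ⊆ (W : Set (EuclideanSpace ℝ (Fin d))) :=
    fun v hv => hv.2
  have hdiffW : ∀ a ∈ S, ∀ b ∈ S, a - b ∈ W := by
    intro a ha b hb
    have h1 : a ∈ affineSpan ℝ S := subset_affineSpan ℝ S ha
    have h2 : b ∈ affineSpan ℝ S := subset_affineSpan ℝ S hb
    simpa [vsub_eq_sub] using AffineSubspace.vsub_mem_direction h1 h2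
  have hdiffM : ∀ a ∈ S, ∀ b ∈ S, a - b ∈ M := by
    intro a ha b hb
    exact ⟨sub_mem ha.1 hb.1, hdiffW a ha b hb⟩
  have hspanM : Submodule.span ℝ (M : Set (EuclideanSpace ℝ (Fin d))) = W := by
    apply le_antisymm
    · exact Submodule.span_le.mpr hMW
    · rw [hW, direction_affineSpan, vectorSpan_def]
      refine Submodule.span_le.mpr ?_
      rintro v ⟨a, ha, b, hb, rfl⟩
      exact Submodule.subset_span (hdiffM a ha b hb)
  have hdiscM : DiscreteTopology M := by
    have h : DiscreteTopology (Λ : Set (EuclideanSpace ℝ (Fin d))) := ‹DiscreteTopology Λ›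
    exact DiscreteTopology.of_subset h (fun v hv => hMΛ v hv)
  set L : Submodule ℤ W := M.comap ((W.subtype).restrictScalars ℤ) with hL
  have hdiscL : DiscreteTopology L := by
    refine DiscreteTopology.preimage_of_continuous_injective
      (M : Set (EuclideanSpace ℝ (Fin d))) ?_ (Submodule.injective_subtype W)
    exact W.subtype.continuous_of_finiteDimensional
  have h_img : W.subtype '' (L : Set W) = (M : Set (EuclideanSpace ℝ (Fin d))) := by
    have : Submodule.map (W.subtype.restrictScalars ℤ) L = M := by
      rw [hL, Submodule.map_comap_eq_self]
      intro v hv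
      exact LinearMap.mem_range.mpr ⟨⟨v, hMW hv⟩, rfl⟩
    rw [← this, Submodule.map_coe]
    rfl
  have hZL : IsZLattice ℝ L := by
    refine ⟨?_⟩
    apply Submodule.map_injective_of_injective (Submodule.injective_subtype W)
    rw [Submodule.map_span, h_img, hspanM, Submodule.map_top, Submodule.range_subtype]
  have hfreeL : Module.Free ℤ L := ZLattice.module_free ℝ L
  have hfinL : Module.Finite ℤ L := ZLattice.module_finite ℝ L
  have hrank : Module.finrank ℤ L = k := by
    rw [ZLattice.rank ℝ L]; exact hdim
  set ι := Module.Free.ChooseBasisIndex ℤ L with hι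
  set b : Module.Basis ι ℤ L := Module.Free.chooseBasis ℤ L with hb
  have hcard : Fintype.card ι = k := by
    rw [← Module.finrank_eq_card_chooseBasisIndex]; exact hrank
  have helmem : ∀ s : S, (⟨(s : EuclideanSpace ℝ (Fin d)) - s₀,
      hdiffW s s.2 s₀ hs₀⟩ : W) ∈ L := fun s => hdiffM s s.2 s₀ hs₀
  set el : S → L := fun s => ⟨⟨(s : EuclideanSpace ℝ (Fin d)) - s₀,
      hdiffW s s.2 s₀ hs₀⟩, helmem s⟩ with hel
  set f : S → ι → ZMod 2 := fun s i => ((b.repr (el s)) i : ZMod 2) with hf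
  have hinj : Function.Injective f := by
    intro s s' hff
    have hdvd : ∀ i, (2 : ℤ) ∣ (b.repr (el s - el s')) i := by
      intro i
      have h1 : (f s) i = (f s') i := congrFun hff i
      have h2 : ((b.repr (el s) i - b.repr (el s') i : ℤ) : ZMod 2) = 0 := by
        push_cast
        rw [sub_eq_zero]
        exact h1
      rw [show el s - el s' = el s + (-1 : ℤ) • el s' by rw [neg_one_smul]; abel,
        b.repr.map_add, b.repr.map_smul, Finsupp.add_apply, Finsupp.smul_apply,
        neg_one_smul, ← sub_eq_add_neg]
      exact (ZMod.intCast_zmod_eq_zero_iff_dvd _ 2).mp h2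
    set z : L := el s - el s' with hz
    set c : ι →₀ ℤ := (b.repr z).mapRange (fun n => n / 2) (by norm_num) with hc
    set m : L := b.repr.symm c with hm
    have hzm : z = (2 : ℤ) • m := by
      apply b.repr.injective
      rw [b.repr.map_smul, LinearEquiv.apply_symm_apply]
      ext i
      simp only [hc, Finsupp.smul_apply, Finsupp.mapRange_apply, smul_eq_mul]
      exact (Int.mul_ediv_cancel' (hdvd i)).symm
    set mE : EuclideanSpace ℝ (Fin d) := ((m : W) : EuclideanSpace ℝ (Fin d)) with hmE
    have hmM : mE ∈ M := m.2
    have hmΛ : mE ∈ Λ := hmM.1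
    have hE : (s : EuclideanSpace ℝ (Fin d)) - (s' : EuclideanSpace ℝ (Fin d))
        = mE + mE := by
      have hzm2 : z = m + m := by rw [hzm, two_zsmul]
      have h := congrArg (fun l : L => ((l : W) : EuclideanSpace ℝ (Fin d))) hzm2
      simp only [hz, hel, AddSubgroupClass.coe_sub, AddMemClass.coe_add] at h
      calc (s : EuclideanSpace ℝ (Fin d)) - (s' : EuclideanSpace ℝ (Fin d))
          = ((s : EuclideanSpace ℝ (Fin d)) - s₀) - ((s' : EuclideanSpace ℝ (Fin d)) - s₀) := by
            abel
        _ = mE + mE := h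
    apply Subtype.ext
    by_contra hne
    set a : EuclideanSpace ℝ (Fin d) := x - (s : EuclideanSpace ℝ (Fin d)) with ha
    set a' : EuclideanSpace ℝ (Fin d) := x - (s' : EuclideanSpace ℝ (Fin d)) with ha'
    have hr1 : ‖a‖ ≤ ‖a'‖ := s.2.2 _ s'.2.1
    have hr2 : ‖a'‖ ≤ ‖a‖ := s'.2.2 _ s.2.1
    have hreq : ‖a‖ = ‖a'‖ := le_antisymm hr1 hr2
    have hμΛ : (s' : EuclideanSpace ℝ (Fin d)) + mE ∈ Λ := add_mem s'.2.1 hmΛ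
    have hmin : ‖a‖ ≤ ‖x - ((s' : EuclideanSpace ℝ (Fin d)) + mE)‖ := s.2.2 _ hμΛ
    set μv : EuclideanSpace ℝ (Fin d) := x - ((s' : EuclideanSpace ℝ (Fin d)) + mE) with hμv
    have hsum : a + a' = μv + μv := by
      have hs' : (s : EuclideanSpace ℝ (Fin d))
          = (s' : EuclideanSpace ℝ (Fin d)) + (mE + mE) := by
        rw [← hE]; abel
      rw [ha, ha', hμv, hs']; abel
    have habne : a ≠ a' := by
      intro h
      apply hne
      have := sub_eq_zero.mpr h
      rw [ha, ha'] at this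
      have : (s' : EuclideanSpace ℝ (Fin d)) - (s : EuclideanSpace ℝ (Fin d)) = 0 := by
        rw [← this]; abel
      have := sub_eq_zero.mp this
      exact this.symm
    have hpos : 0 < ‖a - a'‖ := norm_pos_iff.mpr (sub_ne_zero.mpr habne)
    have h1 : ‖a + a'‖ ^ 2 = ‖a‖ ^ 2 + 2 * inner ℝ a a' + ‖a'‖ ^ 2 := norm_add_sq_real a a'
    have h2 : ‖a - a'‖ ^ 2 = ‖a‖ ^ 2 - 2 * inner ℝ a a' + ‖a'‖ ^ 2 := norm_sub_sq_real a a'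
    have h4 : ‖a + a'‖ = 2 * ‖μv‖ := by
      rw [hsum, ← two_smul ℝ μv, norm_smul]
      norm_num
    have h5 : (2 * ‖μv‖) ^ 2 < (2 * ‖a‖) ^ 2 := by
      rw [← h4]
      have hsq : ‖a‖ ^ 2 = ‖a'‖ ^ 2 := by rw [hreq]
      nlinarith [h1, h2, hsq, pow_pos hpos 2]
    have h6 : 2 * ‖μv‖ < 2 * ‖a‖ := by
      have hn1 : (0 : ℝ) ≤ 2 * ‖μv‖ := by positivity
      nlinarith [h5, hn1, norm_nonneg a, norm_nonneg μv]
    linarith [hmin]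
  have hfin : S.Finite := Set.finite_coe_iff.mp (Finite.of_injective f hinj)
  refine ⟨hfin, ?_⟩
  have hnc : S.ncard = Nat.card S := (Nat.card_coe_set_eq S).symm
  rw [hnc]
  calc Nat.card S ≤ Nat.card (ι → ZMod 2) := Nat.card_le_card_of_injective f hinj
    _ = 2 ^ k := by
        rw [Nat.card_eq_fintype_card, Fintype.card_fun, ZMod.card, hcard]
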